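/- arXiv:1508.01256 — 2 statements merged into one kernel-verified Lean document; each statement's English description precedes it below -/
import Mathlib

section
/- Let x ∈ ℝ^n be dissociated and A ∈ {0,1}^{m×n} be binary with exactly d ones per column. Then for every nonzero value ω, the number of rows i ∈ [m] with (Ax)_i = ω is at most d. -/
def Dissociated {n : ℕ} (x : Fin n → ℝ) : Prop :=
  ∀ T₁ T₂ : Finset (Fin n), (∀ j ∈ T₁, x j ≠ 0) → (∀ j ∈ T₂, x j ≠ 0) → T₁ ≠ T₂ →
    ∑ j ∈ T₁, x j ≠ ∑ j ∈ T₂, x j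

theorem stmt3 {m n d : ℕ} (x : Fin n → ℝ) (hx : Dissociated x)
    (A : Matrix (Fin m) (Fin n) ℝ)
    (hbin : ∀ i j, A i j = 0 ∨ A i j = 1)
    (hcol : ∀ j : Fin n, (Finset.univ.filter (fun i : Fin m => A i j = 1)).card = d)
    (ω : ℝ) (hω : ω ≠ 0) :
    (Finset.univ.filter (fun i : Fin m => A.mulVec x i = ω)).card ≤ d := by
  set S := Finset.univ.filter (fun i : Fin m => A.mulVec x i = ω) with hS
  -- mulVec as a sum over the support set
  have key : ∀ i : Fin m, A.mulVec x i =
      ∑ j ∈ Finset.univ.filter (fun j => A i j = 1 ∧ x j ≠ 0), x j := by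
    intro i
    rw [Matrix.mulVec, dotProduct]
    rw [← Finset.sum_filter_ne_zero (s := Finset.univ)]
    apply Finset.sum_congr
    · ext j
      simp only [Finset.mem_filter, Finset.mem_univ, true_and]
      constructor
      · intro h
        rcases hbin i j with h0 | h1
        · simp [h0] at h
        · exact ⟨h1, fun hxj => h (by simp [hxj])⟩
      · rintro ⟨h1, h2⟩
        simp [h1, h2]
    · intro j hj
      simp only [Finset.mem_filter] at hj
      rw [hj.2.1, one_mul]
  rcases S.eq_empty_or_nonempty with he | ⟨i₀, hi₀⟩
  · simp [he]
  · have hi₀' : A.mulVec x i₀ = ω := (Finset.mem_filter.mp hi₀).2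
    set T := Finset.univ.filter (fun j => A i₀ j = 1 ∧ x j ≠ 0) with hT
    have hTne : T.Nonempty := by
      rcases T.eq_empty_or_nonempty with h | h
      · exfalso; apply hω; rw [← hi₀', key i₀, ← hT, h]; simp
      · exact h
    obtain ⟨j₀, hj₀⟩ := hTne
    have hAij₀ : A i₀ j₀ = 1 := (Finset.mem_filter.mp hj₀).2.1
    have hsub : S ⊆ Finset.univ.filter (fun i : Fin m => A i j₀ = 1) := by
      intro i hi
      have hi' : A.mulVec x i = ω := (Finset.mem_filter.mp hi).2
      have hTeq : Finset.univ.filter (fun j => A i j = 1 ∧ x j ≠ 0) = T := by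
        by_contra hne
        exact hx _ _ (fun j hj => (Finset.mem_filter.mp hj).2.2)
          (fun j hj => (Finset.mem_filter.mp hj).2.2) hne
          (by rw [← key i, ← key i₀, hi', hi₀'])
      have : j₀ ∈ Finset.univ.filter (fun j => A i j = 1 ∧ x j ≠ 0) := hTeq ▸ hj₀
      simp only [Finset.mem_filter, Finset.mem_univ, true_and] at this ⊢
      exact this.1
    calc S.card ≤ _ := Finset.card_le_card hsub
      _ = d := hcol j₀
end

section
/- Let G be a (k, ε, d)-expander with ε ≤ 1/4, S a set of left nodes with 0 < |S| ≤ k, and partition S = T ∪ (S∖T) where T is the set of j ∈ S whose column sees at least α = (1−2ε)d unique neighbors in N₁(S). If each node in S∖T contributes at most ⌊α⌋ nodes to N₁(S) (when α ∉ ℕ), then |T| ≥ ((1 − 2εd + ⌊2εd⌋)/(1 + ⌊2εd⌋))·|S|. -/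
/-- Abstract counting form of formula (eq:TvsS-notin-expanded) in the convergence
proof of Parallel-ℓ₀.  Here `s = |S|`, `t = |T|`, `a = |N₁^S(T)|`,
`b = |N₁^S(S∖T)|`, and `α = (1-2ε)d` is not an integer. -/
theorem stmt11 (d : ℕ) (ε : ℝ) (hε0 : 0 < ε) (hε : ε ≤ 1 / 4)
    (α : ℝ) (hα : α = (1 - 2 * ε) * d) (hαnotint : Int.fract α ≠ 0)
    (s t a b : ℕ) (hs : 0 < s) (hts : t ≤ s)
    (hN1 : (1 - 2 * ε) * d * s < (a : ℝ) + b)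
    (ha : (a : ℝ) ≤ d * t)
    (hb : (b : ℝ) ≤ (⌊α⌋ : ℝ) * ((s : ℝ) - t)) :
    ((1 - 2 * ε * d + (⌊2 * ε * (d : ℝ)⌋ : ℝ)) / (1 + (⌊2 * ε * (d : ℝ)⌋ : ℝ))) * s
      ≤ (t : ℝ) := by
  set m : ℤ := ⌊2 * ε * (d : ℝ)⌋ with hm
  have hd0 : (0:ℝ) ≤ 2 * ε * d := by positivity
  have hm0 : (0:ℝ) ≤ (m:ℝ) := by exact_mod_cast Int.floor_nonneg.mpr hd0
  have hfr : (m:ℝ) ≠ 2 * ε * d := by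
    intro h
    apply hαnotint
    have hα2 : α = (((d:ℤ) - m : ℤ) : ℝ) := by push_cast; rw [hα]; linarith
    rw [hα2, Int.fract_intCast]
  have hmlt : (m:ℝ) < 2 * ε * d := lt_of_le_of_ne (Int.floor_le _) hfr
  have hflZ : ⌊α⌋ ≤ (d:ℤ) - m - 1 := by
    have h1 : ⌊α⌋ < (d:ℤ) - m := by
      rw [Int.floor_lt]
      push_cast
      rw [hα]; linarith
    omega
  have hfl : (⌊α⌋ : ℝ) ≤ (d:ℝ) - m - 1 := by exact_mod_cast hflZ
  have hst : (t:ℝ) ≤ s := by exact_mod_cast hts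
  have hb' : (b:ℝ) ≤ ((d:ℝ) - m - 1) * ((s:ℝ) - t) :=
    hb.trans (mul_le_mul_of_nonneg_right hfl (by linarith))
  have hkey : (1 - 2 * ε * d + (m:ℝ)) * s < (1 + (m:ℝ)) * t := by nlinarith
  rw [div_mul_eq_mul_div, div_le_iff₀ (by linarith : (0:ℝ) < 1 + (m:ℝ))]
  nlinarith
end
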